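/- Let G be a group acting by automorphisms and without inversions on a tree T, and let L be a geodesic line in T whose setwise stabilizer H in G acts transitively on the geometric edges of L. Let x ≠ y be vertices of T and suppose g, g' ∈ G satisfy g·[x,y] ⊆ L(ℤ) and g'·[x,y] ⊆ L(ℤ). Then there exists h ∈ H such that h·(g·z) = g'·z for every vertex z ∈ [x,y]. -/

import Mathlib

/-- If a group `G` acts by automorphisms and without inversions on a tree `T`, `L` is a
geodesic line whose setwise stabilizer in `G` acts transitively on the geometric edges
of `L`, and `g, g'` both send the geodesic segment `[x, y]` (with `x ≠ y`) into `L`,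
then there is an element `h` of the setwise stabilizer of `L` with `h • (g • z) = g' • z`
for every `z ∈ [x, y]`. -/
theorem exists_stabilizer_matching {V : Type*} {G : Type*} [Group G] [MulAction G V]
    (T : SimpleGraph V) (hT : T.IsTree)
    (hact : ∀ (g : G) (u v : V), T.Adj u v → T.Adj (g • u) (g • v))
    (hnoinv : ∀ (g : G) (u v : V), T.Adj u v → ¬(g • u = v ∧ g • v = u))
    (L : ℤ → V) (hLinj : Function.Injective L)
    (hLadj : ∀ i : ℤ, T.Adj (L i) (L (i + 1)))
    (htrans : ∀ i j : ℤ, ∃ h : G, (fun v => h • v) '' Set.range L = Set.range L ∧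
      ({h • L i, h • L (i + 1)} : Set V) = {L j, L (j + 1)})
    (x y : V) (hxy : x ≠ y) (g g' : G)
    (hg : ∀ z : V, T.dist x z + T.dist z y = T.dist x y → g • z ∈ Set.range L)
    (hg' : ∀ z : V, T.dist x z + T.dist z y = T.dist x y → g' • z ∈ Set.range L) :
    ∃ h : G, (fun v => h • v) '' Set.range L = Set.range L ∧
      ∀ z : V, T.dist x z + T.dist z y = T.dist x y → h • g • z = g' • z := by
  classical
  have hconn := hT.isConnected
  -- the action preserves graph distance
  have hdle : ∀ (k : G) (u v : V), T.dist (k • u) (k • v) ≤ T.dist u v := by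
    intro k u v
    obtain ⟨p, hp⟩ := hconn.exists_walk_length_eq_dist u v
    have := SimpleGraph.dist_le
      (p.map (⟨fun w => k • w, fun hadj => hact k _ _ hadj⟩ : T →g T))
    simpa [hp] using this
  have hdist : ∀ (k : G) (u v : V), T.dist (k • u) (k • v) = T.dist u v := by
    intro k u v
    refine le_antisymm (hdle k u v) ?_
    have := hdle k⁻¹ (k • u) (k • v)
    simpa using this
  -- explicit walks along L
  have hwalk : ∀ (i : ℤ) (n : ℕ), ∃ w : T.Walk (L i) (L (i + n)),
      w.length = n ∧ w.support = (List.range (n + 1)).map (fun k : ℕ => L (i + k)) := by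
    intro i n
    induction n with
    | zero =>
      refine ⟨SimpleGraph.Walk.nil.copy rfl (congrArg L (by push_cast; ring)), by simp, ?_⟩
      have : List.range 1 = [0] := rfl
      simp [this]
    | succ n ih =>
      obtain ⟨w, hlen, hsupp⟩ := ih
      have hr : ∀ m : ℕ, (List.range (m + 1)).map (fun k : ℕ => L (i + k)) =
          ((List.range m).map (fun k : ℕ => L (i + k))).concat (L (i + m)) := by
        intro m
        rw [List.range_succ]
        simp
      refine ⟨(w.concat (hLadj (i + n))).copy rfl (congrArg L (by push_cast; ring)), ?_, ?_⟩
      · simp [hlen]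
      · rw [SimpleGraph.Walk.support_copy, SimpleGraph.Walk.support_concat, hsupp,
          hr (n + 1), List.concat_eq_append]
        congr 3
        push_cast
        ring
  -- distance along L
  have hLd : ∀ (i : ℤ) (n : ℕ), T.dist (L i) (L (i + n)) = n := by
    intro i n
    obtain ⟨w, hlen, hsupp⟩ := hwalk i n
    have hpath : w.IsPath := by
      rw [SimpleGraph.Walk.isPath_def, hsupp]
      refine List.Nodup.map ?_ List.nodup_range
      intro a b hab
      have := hLinj hab
      omega
    have h1 : T.dist (L i) (L (i + (n : ℤ))) ≤ n := by
      have := SimpleGraph.dist_le w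
      omega
    obtain ⟨q, hq⟩ := hconn.exists_walk_length_eq_dist (L i) (L (i + (n : ℤ)))
    have hup : (⟨w, hpath⟩ : T.Path _ _) = q.toPath := hT.IsAcyclic.path_unique _ _
    have hww : w = q.bypass := congrArg Subtype.val hup
    have h2 : n ≤ T.dist (L i) (L (i + (n : ℤ))) := by
      calc n = w.length := hlen.symm
        _ = q.bypass.length := by rw [hww]
        _ ≤ q.length := SimpleGraph.Walk.length_bypass_le q
        _ = _ := hq
    omega
  have hLdist : ∀ i j : ℤ, T.dist (L i) (L j) = (j - i).natAbs := by
    intro i j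
    rcases le_total i j with hij | hij
    · have e : L j = L (i + ((j - i).natAbs : ℕ)) := congrArg L (by omega)
      rw [e, hLd]
    · have e : L i = L (j + ((i - j).natAbs : ℕ)) := congrArg L (by omega)
      rw [SimpleGraph.dist_comm, e, hLd]
      omega
  -- find the neighbour z1 of x on the segment [x, y]
  have hd0 : 0 < T.dist x y := hconn.pos_dist_of_ne hxy
  obtain ⟨z1, hadj, hz1y⟩ : ∃ z1, T.Adj x z1 ∧ T.dist z1 y = T.dist x y - 1 := by
    obtain ⟨p, hp⟩ := hconn.exists_walk_length_eq_dist x y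
    cases p with
    | nil => exact absurd rfl hxy
    | cons hadj q =>
      rename_i b
      refine ⟨b, hadj, ?_⟩
      have h1 : T.dist b y ≤ q.length := SimpleGraph.dist_le q
      have h2 : T.dist x y ≤ T.dist x b + T.dist b y := hconn.dist_triangle
      have h3 : T.dist x b = 1 := SimpleGraph.dist_eq_one_iff_adj.mpr hadj
      simp only [SimpleGraph.Walk.length_cons] at hp
      omega
  have hdz1 : T.dist x z1 = 1 := SimpleGraph.dist_eq_one_iff_adj.mpr hadj
  have hz1seg : T.dist x z1 + T.dist z1 y = T.dist x y := by omega
  have hxseg : T.dist x x + T.dist x y = T.dist x y := by simp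
  have hyseg : T.dist x y + T.dist y y = T.dist x y := by simp
  obtain ⟨a0, ha0⟩ := hg x hxseg
  obtain ⟨p0, hp0⟩ := hg z1 hz1seg
  obtain ⟨a1, ha1⟩ := hg' x hxseg
  obtain ⟨p1, hp1⟩ := hg' z1 hz1seg
  have key0 : (p0 - a0).natAbs = 1 := by
    have e : T.dist (L a0) (L p0) = T.dist x z1 := by
      rw [ha0, hp0]; exact hdist g x z1
    rw [hLdist, hdz1] at e
    exact e
  have key1 : (p1 - a1).natAbs = 1 := by
    have e : T.dist (L a1) (L p1) = T.dist x z1 := by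
      rw [ha1, hp1]; exact hdist g' x z1
    rw [hLdist, hdz1] at e
    exact e
  have hedge : ∀ (a p : ℤ), (p - a).natAbs = 1 → ∃ i : ℤ,
      ∀ c : G, ({c • L i, c • L (i + 1)} : Set V) = {c • L a, c • L p} := by
    intro a p hap
    have h' : p = a + 1 ∨ a = p + 1 := by omega
    rcases h' with h' | h'
    · exact ⟨a, fun c => by rw [h']⟩
    · exact ⟨p, fun c => by rw [h', Set.pair_comm]⟩
  obtain ⟨i0, hi0⟩ := hedge a0 p0 key0
  obtain ⟨i1, hi1⟩ := hedge a1 p1 key1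
  obtain ⟨h, hHL, hHedge⟩ := htrans i0 i1
  have hsets : ({h • g • x, h • g • z1} : Set V) = {g' • x, g' • z1} := by
    have e1 := hi0 h
    have e2 := hi1 1
    simp only [one_smul] at e2
    rw [ha0, hp0] at e1
    rw [ha1, hp1] at e2
    exact e1.symm.trans (hHedge.trans e2)
  have hxz1ne : x ≠ z1 := hadj.ne
  have hmatch : h • g • x = g' • x ∧ h • g • z1 = g' • z1 := by
    have m1 : h • g • x ∈ ({g' • x, g' • z1} : Set V) := by
      rw [← hsets]; exact Set.mem_insert _ _
    have m2 : h • g • z1 ∈ ({g' • x, g' • z1} : Set V) := by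
      rw [← hsets]; exact Set.mem_insert_iff.mpr (Or.inr rfl)
    simp only [Set.mem_insert_iff, Set.mem_singleton_iff] at m1 m2
    rcases m1 with m1 | m1
    · refine ⟨m1, ?_⟩
      rcases m2 with m2 | m2
      · exact absurd (MulAction.injective g (MulAction.injective h (m1.trans m2.symm))) hxz1ne
      · exact m2
    · exfalso
      have m2' : h • g • z1 = g' • x := by
        rcases m2 with m2 | m2
        · exact m2
        · exact absurd (MulAction.injective g (MulAction.injective h (m1.trans m2.symm)))
            hxz1ne
      refine hnoinv (g'⁻¹ * (h * g)) x z1 hadj ⟨?_, ?_⟩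
      · simp only [mul_smul, m1, inv_smul_smul]
      · simp only [mul_smul, m2', inv_smul_smul]
  have hHmem : ∀ v ∈ Set.range L, h • v ∈ Set.range L := by
    intro v hv
    rw [← hHL]
    exact ⟨v, hv, rfl⟩
  -- endpoint indices
  obtain ⟨b0, hb0⟩ := hHmem _ (hg y hyseg)
  obtain ⟨b1, hb1⟩ := hg' y hyseg
  have hLa1 : L a1 = h • g • x := ha1.trans hmatch.1.symm
  have hLp1 : L p1 = h • g • z1 := hp1.trans hmatch.2.symm
  have hdd : ∀ u v : V, T.dist (h • g • u) (h • g • v) = T.dist u v := by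
    intro u v
    rw [hdist h, hdist g]
  -- index constraints for endpoints
  have c1 : (b0 - a1).natAbs = T.dist x y := by
    have e : T.dist (L a1) (L b0) = T.dist x y := by rw [hLa1, hb0]; exact hdd x y
    rw [hLdist] at e; exact e
  have c2 : (b1 - a1).natAbs = T.dist x y := by
    have e : T.dist (L a1) (L b1) = T.dist x y := by rw [ha1, hb1]; exact hdist g' x y
    rw [hLdist] at e; exact e
  have c3 : (p1 - a1).natAbs = 1 := key1
  have c4 : (b0 - p1).natAbs = T.dist z1 y := by
    have e : T.dist (L p1) (L b0) = T.dist z1 y := by rw [hLp1, hb0]; exact hdd z1 y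
    rw [hLdist] at e; exact e
  have c5 : (b1 - p1).natAbs = T.dist z1 y := by
    have e : T.dist (L p1) (L b1) = T.dist z1 y := by rw [hp1, hb1]; exact hdist g' z1 y
    rw [hLdist] at e; exact e
  refine ⟨h, hHL, ?_⟩
  intro z hz
  obtain ⟨m0, hm0⟩ := hHmem _ (hg z hz)
  obtain ⟨m1, hm1⟩ := hg' z hz
  have d1 : (m0 - a1).natAbs = T.dist x z := by
    have e : T.dist (L a1) (L m0) = T.dist x z := by rw [hLa1, hm0]; exact hdd x z
    rw [hLdist] at e; exact e
  have d2 : (b0 - m0).natAbs = T.dist z y := by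
    have e : T.dist (L m0) (L b0) = T.dist z y := by rw [hm0, hb0]; exact hdd z y
    rw [hLdist] at e; exact e
  have d3 : (m1 - a1).natAbs = T.dist x z := by
    have e : T.dist (L a1) (L m1) = T.dist x z := by rw [ha1, hm1]; exact hdist g' x z
    rw [hLdist] at e; exact e
  have d4 : (b1 - m1).natAbs = T.dist z y := by
    have e : T.dist (L m1) (L b1) = T.dist z y := by rw [hm1, hb1]; exact hdist g' z y
    rw [hLdist] at e; exact e
  have hmm : m0 = m1 := by omega
  rw [← hm0, ← hm1, hmm]
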